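/- Let n, M ≥ 1 be integers, σ > 0, u ∈ ℝ, and let x₁, …, x_M ∈ ℝⁿ satisfy ⟨x_k, x_j⟩ = n if k = j and 0 if k ≠ j (Euclidean inner product). Let P be the law on ℝⁿ of a vector Y with independent N(0, σ²) coordinates, and define ℓ(y) = exp(−nMu²/(2σ²)) · 2^{−M} Σ_{ξ ∈ {−1,1}^M} exp((u/σ²) Σ_{k=1}^M ξ_k ⟨x_k, y⟩). Then ∫ ℓ dP = 1 and ∫ ℓ² dP = (cosh(n u²/σ²))^M. -/

import Mathlib

open MeasureTheory ProbabilityTheory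
open scoped NNReal ENNReal

lemma pi_integral_prod {ι : Type*} [Fintype ι] {α : Type*} [MeasurableSpace α]
    (μ : Measure α) [SigmaFinite μ] (f : ι → α → ℝ) :
    ∫ x : ι → α, ∏ i, f i (x i) ∂(Measure.pi fun _ => μ) = ∏ i, ∫ x, f i x ∂μ := by
  letI : MeasureSpace α := ⟨μ⟩
  haveI : SigmaFinite (volume : Measure α) := ‹SigmaFinite μ›
  rw [show (Measure.pi fun _ : ι => μ) = (volume : Measure (ι → α)) from
    (MeasureTheory.volume_pi).symm]
  exact MeasureTheory.integral_fintype_prod_eq_prod f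

lemma pi_integrable_prod {ι : Type*} [Fintype ι] {α : Type*} [MeasurableSpace α]
    (μ : Measure α) [SigmaFinite μ] (f : ι → α → ℝ) (hf : ∀ i, Integrable (f i) μ) :
    Integrable (fun x : ι → α => ∏ i, f i (x i)) (Measure.pi fun _ => μ) := by
  letI : MeasureSpace α := ⟨μ⟩
  haveI : SigmaFinite (volume : Measure α) := ‹SigmaFinite μ›
  rw [show (Measure.pi fun _ : ι => μ) = (volume : Measure (ι → α)) from
    (MeasureTheory.volume_pi).symm]
  exact Integrable.fintype_prod hf

lemma pdf_mul_exp (σ t : ℝ) (hσ : 0 < σ) (y : ℝ) :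
    Real.exp (t * y) * gaussianPDFReal 0 (Real.toNNReal (σ ^ 2)) y
      = Real.exp (σ ^ 2 * t ^ 2 / 2) * gaussianPDFReal (t * σ ^ 2) (Real.toNNReal (σ ^ 2)) y := by
  have hv : ((Real.toNNReal (σ ^ 2) : ℝ≥0) : ℝ) = σ ^ 2 := Real.coe_toNNReal _ (sq_nonneg σ)
  have hσ2 : (σ : ℝ) ^ 2 ≠ 0 := by positivity
  simp only [gaussianPDFReal, hv]
  rw [mul_left_comm, mul_left_comm (Real.exp (σ ^ 2 * t ^ 2 / 2)), ← Real.exp_add, ← Real.exp_add]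
  congr 1
  field_simp
  ring

lemma gaussianReal_eq_withDensity (σ : ℝ) (hσ : 0 < σ) :
    gaussianReal 0 (Real.toNNReal (σ ^ 2))
      = volume.withDensity
          (fun y => ((gaussianPDFReal 0 (Real.toNNReal (σ ^ 2)) y).toNNReal : ℝ≥0∞)) := by
  have hv : (Real.toNNReal (σ ^ 2)) ≠ 0 := by
    simp only [ne_eq, Real.toNNReal_eq_zero, not_le]
    positivity
  rw [gaussianReal_of_var_ne_zero _ hv]
  rfl

lemma integral_exp_gaussianR (σ t : ℝ) (hσ : 0 < σ) :
    ∫ y, Real.exp (t * y) ∂(gaussianReal 0 (Real.toNNReal (σ ^ 2)))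
      = Real.exp (σ ^ 2 * t ^ 2 / 2) := by
  have hv : (Real.toNNReal (σ ^ 2)) ≠ 0 := by
    simp only [ne_eq, Real.toNNReal_eq_zero, not_le]; positivity
  rw [gaussianReal_eq_withDensity σ hσ,
    integral_withDensity_eq_integral_smul
      ((measurable_gaussianPDFReal 0 _).real_toNNReal) (fun y => Real.exp (t * y))]
  have : ∀ y, (gaussianPDFReal 0 (Real.toNNReal (σ ^ 2)) y).toNNReal • Real.exp (t * y)
      = Real.exp (σ ^ 2 * t ^ 2 / 2) * gaussianPDFReal (t * σ ^ 2) (Real.toNNReal (σ ^ 2)) y := by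
    intro y
    rw [NNReal.smul_def, smul_eq_mul, Real.coe_toNNReal _ (gaussianPDFReal_nonneg _ _ _),
      mul_comm, pdf_mul_exp σ t hσ y]
  simp_rw [this]
  rw [integral_const_mul, integral_gaussianPDFReal_eq_one _ hv, mul_one]

lemma integrable_exp_gaussianR (σ t : ℝ) (hσ : 0 < σ) :
    Integrable (fun y => Real.exp (t * y)) (gaussianReal 0 (Real.toNNReal (σ ^ 2))) := by
  rw [gaussianReal_eq_withDensity σ hσ,
    integrable_withDensity_iff_integrable_smul
      ((measurable_gaussianPDFReal 0 _).real_toNNReal)]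
  have : ∀ y, (gaussianPDFReal 0 (Real.toNNReal (σ ^ 2)) y).toNNReal • Real.exp (t * y)
      = Real.exp (σ ^ 2 * t ^ 2 / 2) * gaussianPDFReal (t * σ ^ 2) (Real.toNNReal (σ ^ 2)) y := by
    intro y
    rw [NNReal.smul_def, smul_eq_mul, Real.coe_toNNReal _ (gaussianPDFReal_nonneg _ _ _),
      mul_comm, pdf_mul_exp σ t hσ y]
  simp_rw [this]
  exact (integrable_gaussianPDFReal _ _).const_mul _

lemma integral_exp_sum_gaussian (n : ℕ) (σ : ℝ) (hσ : 0 < σ) (a : Fin n → ℝ) :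
    ∫ y, Real.exp (∑ i, a i * y i)
        ∂(Measure.pi fun _ : Fin n => gaussianReal 0 (Real.toNNReal (σ ^ 2)))
      = Real.exp (σ ^ 2 / 2 * ∑ i, (a i) ^ 2) := by
  have h1 : ∀ y : Fin n → ℝ, Real.exp (∑ i, a i * y i) = ∏ i, Real.exp (a i * y i) :=
    fun y => Real.exp_sum _ _
  simp_rw [h1]
  rw [pi_integral_prod (gaussianReal 0 (Real.toNNReal (σ ^ 2)))
    (fun i y => Real.exp (a i * y))]
  have h2 : ∀ i : Fin n, ∫ y, Real.exp (a i * y) ∂(gaussianReal 0 (Real.toNNReal (σ ^ 2)))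
      = Real.exp (σ ^ 2 * (a i) ^ 2 / 2) := fun i => integral_exp_gaussianR σ (a i) hσ
  simp_rw [h2, ← Real.exp_sum, Finset.mul_sum]
  congr 1
  exact Finset.sum_congr rfl (fun i _ => by ring)

lemma integrable_exp_sum_gaussian (n : ℕ) (σ : ℝ) (hσ : 0 < σ) (a : Fin n → ℝ) :
    Integrable (fun y => Real.exp (∑ i, a i * y i))
      (Measure.pi fun _ : Fin n => gaussianReal 0 (Real.toNNReal (σ ^ 2))) := by
  have h1 : ∀ y : Fin n → ℝ, Real.exp (∑ i, a i * y i) = ∏ i, Real.exp (a i * y i) :=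
    fun y => Real.exp_sum _ _
  simp_rw [h1]
  exact pi_integrable_prod _ _ (fun i => integrable_exp_gaussianR σ (a i) hσ)

lemma key_exponent (n M : ℕ) (c : ℝ) (x : Fin M → Fin n → ℝ) (b : Fin M → ℝ) (y : Fin n → ℝ) :
    c * ∑ k, b k * ∑ i, x k i * y i
      = ∑ i, (c * ∑ k, b k * x k i) * y i := by
  simp_rw [Finset.mul_sum, Finset.sum_mul]
  rw [Finset.sum_comm]
  exact Finset.sum_congr rfl fun k _ => Finset.sum_congr rfl fun i _ => by ring

lemma key_quad (n M : ℕ) (c : ℝ) (x : Fin M → Fin n → ℝ)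
    (hx : ∀ k j : Fin M, (∑ i, x k i * x j i) = if k = j then (n : ℝ) else 0)
    (b : Fin M → ℝ) :
    ∑ i, (c * ∑ k, b k * x k i) ^ 2 = c ^ 2 * ((n : ℝ) * ∑ k, (b k) ^ 2) := by
  have : ∀ i, (c * ∑ k, b k * x k i) ^ 2
      = c ^ 2 * ∑ k, ∑ j, (b k * b j) * (x k i * x j i) := by
    intro i
    rw [mul_pow, sq (∑ k, b k * x k i), Finset.sum_mul_sum]
    congr 1
    exact Finset.sum_congr rfl fun k _ => Finset.sum_congr rfl fun j _ => by ring
  simp_rw [this, ← Finset.mul_sum]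
  congr 1
  rw [Finset.sum_comm]
  have h2 : ∀ k : Fin M, ∑ i, ∑ j, (b k * b j) * (x k i * x j i)
      = (b k) ^ 2 * (n : ℝ) := by
    intro k
    rw [Finset.sum_comm]
    have h3 : ∀ j : Fin M, ∑ i, (b k * b j) * (x k i * x j i)
        = (b k * b j) * (if k = j then (n : ℝ) else 0) := by
      intro j
      rw [← Finset.mul_sum, hx k j]
    simp_rw [h3]
    simp [mul_ite, Finset.sum_ite_eq, sq]
  simp_rw [h2]
  rw [Finset.mul_sum]
  exact Finset.sum_congr rfl fun k _ => by ring

lemma key_integral (n M : ℕ) (σ u : ℝ) (hσ : 0 < σ) (x : Fin M → Fin n → ℝ)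
    (hx : ∀ k j : Fin M, (∑ i, x k i * x j i) = if k = j then (n : ℝ) else 0)
    (b : Fin M → ℝ) :
    ∫ y, Real.exp ((u / σ ^ 2) * ∑ k, b k * ∑ i, x k i * y i)
        ∂(Measure.pi fun _ : Fin n => gaussianReal 0 (Real.toNNReal (σ ^ 2)))
      = Real.exp (u ^ 2 / (2 * σ ^ 2) * ((n : ℝ) * ∑ k, (b k) ^ 2)) := by
  simp_rw [key_exponent]
  rw [integral_exp_sum_gaussian n σ hσ _, key_quad n M _ x hx b]
  congr 1
  have h : (σ : ℝ) ^ 2 ≠ 0 := by positivity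
  field_simp

lemma key_integrable (n M : ℕ) (σ u : ℝ) (hσ : 0 < σ) (x : Fin M → Fin n → ℝ)
    (b : Fin M → ℝ) :
    Integrable (fun y => Real.exp ((u / σ ^ 2) * ∑ k, b k * ∑ i, x k i * y i))
      (Measure.pi fun _ : Fin n => gaussianReal 0 (Real.toNNReal (σ ^ 2))) := by
  simp_rw [key_exponent]
  exact integrable_exp_sum_gaussian n σ hσ _

/-- Likelihood-ratio moment identities for the Rademacher-mixture alternative: if
`x₁, …, x_M ∈ ℝⁿ` satisfy `⟨x_k, x_j⟩ = n·δ_{kj}` and `P` is the law of a vector with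
i.i.d. `N(0,σ²)` coordinates, then the likelihood ratio
`ℓ(y) = exp(−nMu²/(2σ²)) 2^{−M} Σ_{ξ ∈ {−1,1}^M} exp((u/σ²) Σ_k ξ_k ⟨x_k, y⟩)`
satisfies `∫ ℓ dP = 1` and `∫ ℓ² dP = (cosh(nu²/σ²))^M`. -/
theorem likelihood_ratio_moments (n M : ℕ) (hn : 1 ≤ n) (hM : 1 ≤ M)
    (σ u : ℝ) (hσ : 0 < σ) (x : Fin M → Fin n → ℝ)
    (hx : ∀ k j : Fin M, (∑ i, x k i * x j i) = if k = j then (n : ℝ) else 0) :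
    let ℓ : (Fin n → ℝ) → ℝ := fun y =>
      Real.exp (-((n : ℝ) * M * u ^ 2) / (2 * σ ^ 2)) * ((2 : ℝ) ^ M)⁻¹ *
        ∑ ξ : Fin M → Bool,
          Real.exp ((u / σ ^ 2) * ∑ k, (if ξ k then (1 : ℝ) else -1) * ∑ i, x k i * y i)
    let P : Measure (Fin n → ℝ) :=
      Measure.pi fun _ : Fin n => gaussianReal 0 (Real.toNNReal (σ ^ 2))
    (∫ y, ℓ y ∂P) = 1 ∧ (∫ y, (ℓ y) ^ 2 ∂P) = (Real.cosh ((n : ℝ) * u ^ 2 / σ ^ 2)) ^ M := by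
  intro ℓ P
  have hσ2 : (σ : ℝ) ^ 2 ≠ 0 := by positivity
  have h2M : ((2 : ℝ) ^ M) ≠ 0 := by positivity
  have hInt : ∀ b : Fin M → ℝ,
      Integrable (fun y => Real.exp ((u / σ ^ 2) * ∑ k, b k * ∑ i, x k i * y i)) P :=
    fun b => key_integrable n M σ u hσ x b
  have hKey : ∀ b : Fin M → ℝ,
      ∫ y, Real.exp ((u / σ ^ 2) * ∑ k, b k * ∑ i, x k i * y i) ∂P
        = Real.exp (u ^ 2 / (2 * σ ^ 2) * ((n : ℝ) * ∑ k, (b k) ^ 2)) :=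
    fun b => key_integral n M σ u hσ x hx b
  constructor
  · -- first moment
    have h1 : (∫ y, ℓ y ∂P)
        = Real.exp (-((n : ℝ) * M * u ^ 2) / (2 * σ ^ 2)) * ((2 : ℝ) ^ M)⁻¹ *
          ∑ ξ : Fin M → Bool,
            ∫ y, Real.exp ((u / σ ^ 2) * ∑ k, (if ξ k then (1 : ℝ) else -1) * ∑ i, x k i * y i)
              ∂P := by
      simp only [ℓ]
      rw [integral_const_mul]
      congr 1
      exact integral_finset_sum _ (fun ξ _ => hInt _)
    rw [h1]
    have h2 : ∀ ξ : Fin M → Bool,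
        ∫ y, Real.exp ((u / σ ^ 2) * ∑ k, (if ξ k then (1 : ℝ) else -1) * ∑ i, x k i * y i) ∂P
          = Real.exp (u ^ 2 / (2 * σ ^ 2) * ((n : ℝ) * (M : ℝ))) := by
      intro ξ
      rw [hKey]
      congr 2
      have : ∀ k : Fin M, ((if ξ k then (1 : ℝ) else -1)) ^ 2 = 1 := by
        intro k; by_cases h : ξ k <;> simp [h]
      simp [this]
    simp_rw [h2]
    rw [Finset.sum_const, Finset.card_univ, Fintype.card_fun, Fintype.card_bool,
      Fintype.card_fin, nsmul_eq_mul]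
    push_cast
    have hexp1 : Real.exp (-((n : ℝ) * M * u ^ 2) / (2 * σ ^ 2)) *
        Real.exp (u ^ 2 / (2 * σ ^ 2) * ((n : ℝ) * (M : ℝ))) = 1 := by
      rw [← Real.exp_add, Real.exp_eq_one_iff]
      field_simp
      ring
    calc Real.exp (-((n : ℝ) * M * u ^ 2) / (2 * σ ^ 2)) * ((2 : ℝ) ^ M)⁻¹ *
          ((2 : ℝ) ^ M * Real.exp (u ^ 2 / (2 * σ ^ 2) * ((n : ℝ) * (M : ℝ))))
        = (Real.exp (-((n : ℝ) * M * u ^ 2) / (2 * σ ^ 2)) *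
            Real.exp (u ^ 2 / (2 * σ ^ 2) * ((n : ℝ) * (M : ℝ)))) *
          (((2 : ℝ) ^ M)⁻¹ * (2 : ℝ) ^ M) := by ring
      _ = 1 := by rw [hexp1, inv_mul_cancel₀ h2M, mul_one]
  · -- second moment
    set t : ℝ := (n : ℝ) * u ^ 2 / σ ^ 2 with htdef
    have hexpand : ∀ y, (ℓ y) ^ 2
        = (Real.exp (-((n : ℝ) * M * u ^ 2) / (2 * σ ^ 2))) ^ 2 * (((2 : ℝ) ^ M)⁻¹) ^ 2 *
          ∑ ξ : Fin M → Bool, ∑ ξ' : Fin M → Bool,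
            Real.exp ((u / σ ^ 2) * ∑ k,
              ((if ξ k then (1 : ℝ) else -1) + (if ξ' k then (1 : ℝ) else -1)) *
                ∑ i, x k i * y i) := by
      intro y
      simp only [ℓ]
      rw [mul_pow, mul_pow, sq (∑ ξ : Fin M → Bool, _), Finset.sum_mul_sum]
      congr 1
      refine Finset.sum_congr rfl fun ξ _ => Finset.sum_congr rfl fun ξ' _ => ?_
      rw [← Real.exp_add]
      congr 1
      rw [← mul_add, ← Finset.sum_add_distrib]
      congr 1
      exact Finset.sum_congr rfl fun k _ => (add_mul _ _ _).symm
    have h1 : (∫ y, (ℓ y) ^ 2 ∂P)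
        = (Real.exp (-((n : ℝ) * M * u ^ 2) / (2 * σ ^ 2))) ^ 2 * (((2 : ℝ) ^ M)⁻¹) ^ 2 *
          ∑ ξ : Fin M → Bool, ∑ ξ' : Fin M → Bool,
            ∫ y, Real.exp ((u / σ ^ 2) * ∑ k,
              ((if ξ k then (1 : ℝ) else -1) + (if ξ' k then (1 : ℝ) else -1)) *
                ∑ i, x k i * y i) ∂P := by
      simp_rw [hexpand]
      rw [integral_const_mul]
      congr 1
      rw [integral_finset_sum _ (fun ξ _ => integrable_finset_sum _ (fun ξ' _ => hInt _))]
      exact Finset.sum_congr rfl fun ξ _ => integral_finset_sum _ (fun ξ' _ => hInt _)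
    rw [h1]
    have h2 : ∀ ξ ξ' : Fin M → Bool,
        ∫ y, Real.exp ((u / σ ^ 2) * ∑ k,
            ((if ξ k then (1 : ℝ) else -1) + (if ξ' k then (1 : ℝ) else -1)) *
              ∑ i, x k i * y i) ∂P
          = Real.exp (t * M) *
            Real.exp (t * ∑ k, (if ξ k then (1 : ℝ) else -1) * (if ξ' k then (1 : ℝ) else -1)) := by
      intro ξ ξ'
      rw [hKey, ← Real.exp_add]
      congr 1
      have hb : ∑ k, ((if ξ k then (1 : ℝ) else -1) + (if ξ' k then (1 : ℝ) else -1)) ^ 2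
          = 2 * (M : ℝ) + 2 * ∑ k, (if ξ k then (1 : ℝ) else -1) * (if ξ' k then (1 : ℝ) else -1) := by
        have : ∀ k : Fin M, ((if ξ k then (1 : ℝ) else -1) + (if ξ' k then (1 : ℝ) else -1)) ^ 2
            = 2 + 2 * ((if ξ k then (1 : ℝ) else -1) * (if ξ' k then (1 : ℝ) else -1)) := by
          intro k
          by_cases h1 : ξ k <;> by_cases h2 : ξ' k <;> simp [h1, h2] <;> norm_num
        simp_rw [this]
        rw [Finset.sum_add_distrib, Finset.sum_const, Finset.card_univ, Fintype.card_fin,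
          ← Finset.mul_sum, nsmul_eq_mul]
        ring
      rw [hb, htdef]
      field_simp
    simp_rw [h2]
    have h3 : ∀ ξ : Fin M → Bool,
        ∑ ξ' : Fin M → Bool,
          Real.exp (t * ∑ k, (if ξ k then (1 : ℝ) else -1) * (if ξ' k then (1 : ℝ) else -1))
          = (2 * Real.cosh t) ^ M := by
      intro ξ
      have e1 : ∀ ξ' : Fin M → Bool,
          Real.exp (t * ∑ k, (if ξ k then (1 : ℝ) else -1) * (if ξ' k then (1 : ℝ) else -1))
            = ∏ k, Real.exp (t * ((if ξ k then (1 : ℝ) else -1) * (if ξ' k then (1 : ℝ) else -1))) := by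
        intro ξ'; rw [Finset.mul_sum, Real.exp_sum]
      simp_rw [e1]
      rw [← Fintype.piFinset_univ, ← Finset.prod_univ_sum (fun _ : Fin M => (Finset.univ : Finset Bool))
        (fun k b => Real.exp (t * ((if ξ k then (1 : ℝ) else -1) * (if b then (1 : ℝ) else -1))))]
      have e2 : ∀ k : Fin M,
          (∑ b : Bool, Real.exp (t * ((if ξ k then (1 : ℝ) else -1) * (if b then (1 : ℝ) else -1))))
            = 2 * Real.cosh t := by
        intro k
        rw [Fintype.sum_bool]
        by_cases h : ξ k <;> simp [h, Real.cosh_eq, mul_neg_one, mul_one] <;> ring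
      simp_rw [e2]
      rw [Finset.prod_const, Finset.card_univ, Fintype.card_fin]
    have h4 : ∀ ξ : Fin M → Bool,
        ∑ ξ' : Fin M → Bool, Real.exp (t * M) *
          Real.exp (t * ∑ k, (if ξ k then (1 : ℝ) else -1) * (if ξ' k then (1 : ℝ) else -1))
          = Real.exp (t * M) * (2 * Real.cosh t) ^ M := by
      intro ξ
      rw [← Finset.mul_sum, h3 ξ]
    simp_rw [h4]
    rw [Finset.sum_const, Finset.card_univ, Fintype.card_fun, Fintype.card_bool,
      Fintype.card_fin, nsmul_eq_mul, mul_pow (2 : ℝ) (Real.cosh t)]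
    push_cast
    have hexp2 : (Real.exp (-((n : ℝ) * M * u ^ 2) / (2 * σ ^ 2))) ^ 2 * Real.exp (t * M) = 1 := by
      rw [sq, ← Real.exp_add, ← Real.exp_add, Real.exp_eq_one_iff, htdef]
      field_simp
      ring
    have h2pow : (((2 : ℝ) ^ M)⁻¹) ^ 2 * ((2 : ℝ) ^ M * (2 : ℝ) ^ M) = 1 := by
      field_simp
    calc (Real.exp (-((n : ℝ) * M * u ^ 2) / (2 * σ ^ 2))) ^ 2 * (((2 : ℝ) ^ M)⁻¹) ^ 2 *
          ((2 : ℝ) ^ M * (Real.exp (t * M) * ((2 : ℝ) ^ M * Real.cosh t ^ M)))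
        = ((Real.exp (-((n : ℝ) * M * u ^ 2) / (2 * σ ^ 2))) ^ 2 * Real.exp (t * M)) *
          ((((2 : ℝ) ^ M)⁻¹) ^ 2 * ((2 : ℝ) ^ M * (2 : ℝ) ^ M)) * Real.cosh t ^ M := by ring
      _ = Real.cosh t ^ M := by rw [hexp2, h2pow, one_mul, one_mul]
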